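/- Inversion with center at the first isodynamic point S of triangle ABC maps the vertices A, B, C to three points forming an equilateral triangle. -/

import Mathlib

open EuclideanGeometry Real

noncomputable section

abbrev Pt := EuclideanSpace ℝ (Fin 2)

/-- `S` is the first isodynamic point of triangle `ABC`: it lies on the three
Apollonius circles (e.g. the `A`-Apollonius circle is the locus of `P` with
`PB/PC = AB/AC`) and lies inside the circumcircle. -/
def IsFirstIsodynamic (A B C S : Pt) : Prop :=
  dist S B * dist A C = dist S C * dist A B ∧
  dist S A * dist B C = dist S C * dist B A ∧
  dist S A * dist C B = dist S B * dist C A ∧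
  ∃ O r, dist O A = r ∧ dist O B = r ∧ dist O C = r ∧ dist O S < r

theorem stmt16 (A B C S : Pt)
    (hABC : AffineIndependent ℝ ![A, B, C])
    (hS : IsFirstIsodynamic A B C S)
    (hSA : S ≠ A) (hSB : S ≠ B) (hSC : S ≠ C) :
    ∀ k : ℝ, 0 < k → ∀ A' B' C' : Pt,
      A' = S + (k ^ 2 / dist A S ^ 2) • (A - S) →
      B' = S + (k ^ 2 / dist B S ^ 2) • (B - S) →
      C' = S + (k ^ 2 / dist C S ^ 2) • (C - S) →
      dist A' B' = dist B' C' ∧ dist B' C' = dist C' A' := by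
  intro k hk A' B' C' hA' hB' hC'
  have hinv : ∀ X : Pt, S + (k ^ 2 / dist X S ^ 2) • (X - S) = inversion S k X := by
    intro X
    simp only [inversion, div_pow, vsub_eq_sub, vadd_eq_add]
    rw [add_comm]
  rw [hinv] at hA' hB' hC'
  subst hA' hB' hC'
  have hA := hSA.symm; have hB := hSB.symm; have hC := hSC.symm
  rw [dist_inversion_inversion hA hB, dist_inversion_inversion hB hC,
    dist_inversion_inversion hC hA]
  obtain ⟨h1, h2, h3, -⟩ := hS
  have dA : dist A S ≠ 0 := dist_ne_zero.2 hA
  have dB : dist B S ≠ 0 := dist_ne_zero.2 hB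
  have dC : dist C S ≠ 0 := dist_ne_zero.2 hC
  rw [dist_comm S B, dist_comm S C] at h1
  rw [dist_comm S A, dist_comm S C, dist_comm B A] at h2
  rw [dist_comm S A, dist_comm S B, dist_comm C A, dist_comm C B] at h3
  constructor
  · field_simp
    linear_combination -h2
  · rw [dist_comm C A]
    field_simp
    linear_combination h3
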